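/- Let f : ℝ → ℝ be a pointwise limit of continuous functions. For each n define Dₙ = {x ∈ ℝ : osc_f(x) ≥ 2⁻ⁿ}, where osc_f(x) is the oscillation of f at x. Then each Dₙ is closed and nowhere dense. -/

import Mathlib

open Filter Topology Set

/-- The oscillation of `f` at `x`: the infimum over open neighborhoods `U` of `x`
of the diameter `sup f(U) - inf f(U)`, valued in `[0, ∞]`. -/
noncomputable def osc (f : ℝ → ℝ) (x : ℝ) : ENNReal :=
  ⨅ U ∈ 𝓝 x, EMetric.diam (f '' U)

lemma osc_le (f : ℝ → ℝ) {x : ℝ} {U : Set ℝ} (hU : U ∈ 𝓝 x) :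
    osc f x ≤ EMetric.diam (f '' U) := by
  exact iInf₂_le U hU

lemma osc_lt (f : ℝ → ℝ) {x : ℝ} {ε : ENNReal} (h : osc f x < ε) :
    ∃ V : Set ℝ, IsOpen V ∧ x ∈ V ∧ EMetric.diam (f '' V) < ε := by
  rw [osc, iInf_lt_iff] at h
  obtain ⟨U, hU⟩ := h
  rw [iInf_lt_iff] at hU
  obtain ⟨hUx, hUd⟩ := hU
  obtain ⟨V, hVU, hVo, hxV⟩ := mem_nhds_iff.mp hUx
  exact ⟨V, hVo, hxV, lt_of_le_of_lt (EMetric.diam_mono (image_mono (f := f) hVU)) hUd⟩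

lemma osc_closed (f : ℝ → ℝ) (ε : ENNReal) :
    IsClosed {x : ℝ | ε ≤ osc f x} := by
  rw [← isOpen_compl_iff, isOpen_iff_mem_nhds]
  intro x hx
  simp only [mem_compl_iff, mem_setOf_eq, not_le] at hx
  obtain ⟨V, hVo, hxV, hVd⟩ := osc_lt f hx
  refine Filter.mem_of_superset (hVo.mem_nhds hxV) ?_
  intro y hy
  simp only [mem_compl_iff, mem_setOf_eq, not_le]
  exact lt_of_le_of_lt (osc_le f (hVo.mem_nhds hy)) hVd

theorem stmt_5 (f : ℝ → ℝ) (fs : ℕ → ℝ → ℝ)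
    (hcont : ∀ n, Continuous (fs n))
    (hlim : ∀ x, Tendsto (fun n => fs n x) atTop (𝓝 (f x)))
    (n : ℕ) :
    IsClosed {x : ℝ | (2 : ENNReal)⁻¹ ^ n ≤ osc f x} ∧
      IsNowhereDense {x : ℝ | (2 : ENNReal)⁻¹ ^ n ≤ osc f x} := by
  set ε : ENNReal := (2 : ENNReal)⁻¹ ^ n with hε
  have hclosed : IsClosed {x : ℝ | ε ≤ osc f x} := osc_closed f ε
  refine ⟨hclosed, ?_⟩
  rw [hclosed.isNowhereDense_iff]
  by_contra hne
  obtain ⟨x₀, hx₀⟩ := nonempty_iff_ne_empty.mpr hne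
  -- find a closed ball inside the interior
  obtain ⟨r, hr, hball⟩ := Metric.nhds_basis_closedBall.mem_iff.mp
    (mem_interior_iff_mem_nhds.mp hx₀)
  set δ : ℝ := (2:ℝ)⁻¹ ^ n / 8 with hδ
  have hδpos : 0 < δ := by positivity
  set E : ℕ → Set ℝ := fun N => {x | ∀ p ≥ N, ∀ q ≥ N, dist (fs p x) (fs q x) ≤ δ} with hE
  have hEclosed : ∀ N, IsClosed (E N) := by
    intro N
    have : E N = ⋂ (p : ℕ) (_ : p ≥ N) (q : ℕ) (_ : q ≥ N),
        {x | dist (fs p x) (fs q x) ≤ δ} := by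
      ext x; simp [hE, mem_iInter]
    rw [this]
    refine isClosed_iInter fun p => isClosed_iInter fun _ =>
      isClosed_iInter fun q => isClosed_iInter fun _ => ?_
    exact isClosed_le (Continuous.dist (hcont p) (hcont q)) continuous_const
  have hEcover : ∀ x : ℝ, ∃ N, x ∈ E N := by
    intro x
    have hc : CauchySeq (fun k => fs k x) := (hlim x).cauchySeq
    obtain ⟨N, hN⟩ := Metric.cauchySeq_iff.mp hc δ hδpos
    exact ⟨N, fun p hp q hq => (hN p hp q hq).le⟩
  -- Baire category on the closed ball
  set B : Set ℝ := Metric.closedBall x₀ r with hB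
  have hBc : IsClosed B := Metric.isClosed_closedBall
  haveI : CompleteSpace B := hBc.completeSpace_coe
  haveI : Nonempty B := ⟨⟨x₀, Metric.mem_closedBall_self hr.le⟩⟩
  have hcover : (⋃ N, (Subtype.val ⁻¹' E N : Set B)) = univ := by
    ext b; simp only [mem_iUnion, mem_preimage, mem_univ, iff_true]
    exact hEcover b.val
  obtain ⟨N, b, hb⟩ := nonempty_interior_of_iUnion_of_closed
    (fun N => (hEclosed N).preimage continuous_subtype_val) hcover
  -- extract an open set in ℝ
  rw [mem_interior_iff_mem_nhds, nhds_induced, Filter.mem_comap] at hb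
  obtain ⟨V, hVnhds, hVsub⟩ := hb
  obtain ⟨V', hV'V, hV'o, hbV'⟩ := mem_nhds_iff.mp hVnhds
  -- b.val ∈ closedBall, so V' meets the open ball
  have hbcl : (b : ℝ) ∈ closure (Metric.ball x₀ r) := by
    rw [closure_ball x₀ hr.ne']
    exact b.2
  obtain ⟨y, hyV', hyball⟩ := mem_closure_iff.mp hbcl V' hV'o hbV'
  set W : Set ℝ := V' ∩ Metric.ball x₀ r with hW
  have hWo : IsOpen W := hV'o.inter Metric.isOpen_ball
  have hyW : y ∈ W := ⟨hyV', hyball⟩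
  have hWE : W ⊆ E N := by
    intro z hz
    have hzB : z ∈ B := Metric.ball_subset_closedBall hz.2
    have : (⟨z, hzB⟩ : B) ∈ Subtype.val ⁻¹' E N := hVsub (hV'V hz.1)
    exact this
  -- every point of W is in E N, hence |f z - fs N z| ≤ δ on W
  have hfclose : ∀ z ∈ W, dist (f z) (fs N z) ≤ δ := by
    intro z hz
    have hzE := hWE hz
    have : Tendsto (fun p => dist (fs p z) (fs N z)) atTop (𝓝 (dist (f z) (fs N z))) :=
      ((hlim z).dist tendsto_const_nhds)
    refine le_of_tendsto this ?_
    filter_upwards [eventually_ge_atTop N] with p hp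
    exact hzE p hp N le_rfl
  -- continuity of fs N at y gives a small neighborhood
  have : ∀ᶠ z in 𝓝 y, dist (fs N z) (fs N y) ≤ δ :=
    (Metric.tendsto_nhds.mp ((hcont N).tendsto y) δ hδpos).mono fun z h => h.le
  obtain ⟨U, hUnhds, hUsub⟩ := Filter.eventually_iff_exists_mem.mp this
  set U' : Set ℝ := U ∩ W with hU'
  have hU'nhds : U' ∈ 𝓝 y := Filter.inter_mem hUnhds (hWo.mem_nhds hyW)
  -- oscillation bound
  have hdiam : EMetric.diam (f '' U') ≤ ENNReal.ofReal (4 * δ) := by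
    apply EMetric.diam_le
    rintro _ ⟨z, hz, rfl⟩ _ ⟨w, hw, rfl⟩
    rw [edist_dist]
    apply ENNReal.ofReal_le_ofReal
    have h1 := hfclose z hz.2
    have h2 := hfclose w hw.2
    have h3 := hUsub z hz.1
    have h4 := hUsub w hw.1
    calc dist (f z) (f w) ≤ dist (f z) (fs N z) + dist (fs N z) (fs N w)
          + dist (fs N w) (f w) := dist_triangle4 _ _ _ _
      _ ≤ δ + (dist (fs N z) (fs N y) + dist (fs N y) (fs N w)) + δ := by
          gcongr
          · exact dist_triangle _ _ _
          · rw [dist_comm]; exact h2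
      _ ≤ δ + (δ + δ) + δ := by
          gcongr
          rw [dist_comm]; exact h4
      _ = 4 * δ := by ring
  have hosc : osc f y ≤ ENNReal.ofReal (4 * δ) := (osc_le f hU'nhds).trans hdiam
  -- y ∈ D, contradiction
  have hyD : ε ≤ osc f y := hball (Metric.ball_subset_closedBall hyball)
  have hlt : ENNReal.ofReal (4 * δ) < ε := by
    have h1 : ε = ENNReal.ofReal ((2:ℝ)⁻¹ ^ n) := by
      rw [ENNReal.ofReal_pow (by norm_num)]
      rw [show ENNReal.ofReal (2:ℝ)⁻¹ = (2:ENNReal)⁻¹ by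
        rw [ENNReal.ofReal_inv_of_pos (by norm_num), ENNReal.ofReal_ofNat]]
    rw [h1, ENNReal.ofReal_lt_ofReal_iff (by positivity)]
    rw [hδ]; ring_nf; nlinarith [pow_pos (by norm_num : (0:ℝ) < 2⁻¹) n]
  exact absurd (hyD.trans hosc) (not_le.mpr hlt)
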